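/- The mediation functional admits the outcome-propensity representation (the paper's Strategy 2): θ0 = E[ (1{E=0}/P(E=0|X)) · b(M,X) ], where b(m,x) := E(Y | E=1, M=m, X=x) and the expectation is over the observed-data distribution. -/

import Mathlib

open MeasureTheory ProbabilityTheory

/-- Conditional probability of `B` given the event `A`: `P(B ∩ A) / P(A)`. -/
noncomputable def cP {Ω : Type*} [MeasurableSpace Ω] (μ : Measure Ω) (B A : Set Ω) : ℝ :=
  (μ (B ∩ A)).toReal / (μ A).toReal

/-- Conditional expectation of `Y` given the event `A`: `E[Y·1_A] / P(A)`. -/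
noncomputable def cE {Ω : Type*} [MeasurableSpace Ω] (μ : Measure Ω) (Y : Ω → ℝ) (A : Set Ω) : ℝ :=
  (∫ ω in A, Y ω ∂μ) / (μ A).toReal

open Classical in
/-- The mediation functional
`θ0 = Σ_{m, x : P(X=x)>0} E(Y | E=1, M=m, X=x) · P(M=m | E=0, X=x) · P(X=x)`. -/
noncomputable def theta0 {Ω 𝒳 𝒮 : Type*} [MeasurableSpace Ω] [Fintype 𝒳] [Fintype 𝒮]
    (μ : Measure Ω) (X : Ω → 𝒳) (M : Ω → 𝒮) (E : Ω → Bool) (Y : Ω → ℝ) : ℝ :=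
  ∑ m : 𝒮, ∑ x ∈ Finset.univ.filter (fun x => μ (X ⁻¹' {x}) ≠ 0),
    cE μ Y (E ⁻¹' {true} ∩ M ⁻¹' {m} ∩ X ⁻¹' {x}) *
      cP μ (M ⁻¹' {m}) (E ⁻¹' {false} ∩ X ⁻¹' {x}) *
      (μ (X ⁻¹' {x})).toReal

/-- the mediation functional admits the outcome–propensity representation
`θ0 = E[ (1{E=0}/P(E=0|X)) · b(M,X) ]` with `b(m,x) = E(Y|E=1,M=m,X=x)`. -/
theorem mediation_outcome_propensity_representation
    {Ω 𝒳 𝒮 : Type*} [MeasurableSpace Ω] [Fintype 𝒳] [Fintype 𝒮]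
    [MeasurableSpace 𝒳] [MeasurableSingletonClass 𝒳]
    [MeasurableSpace 𝒮] [MeasurableSingletonClass 𝒮]
    (μ : Measure Ω) [IsProbabilityMeasure μ]
    (X : Ω → 𝒳) (M : Ω → 𝒮) (E : Ω → Bool) (Y : Ω → ℝ)
    (hX : Measurable X) (hM : Measurable M) (hE : Measurable E)
    (hY : Integrable Y μ)
    (hposE : ∀ (e : Bool) (x : 𝒳), μ (X ⁻¹' {x}) ≠ 0 → μ (E ⁻¹' {e} ∩ X ⁻¹' {x}) ≠ 0)
    (hposM : ∀ (m : 𝒮) (e : Bool) (x : 𝒳), μ (X ⁻¹' {x}) ≠ 0 →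
      μ (M ⁻¹' {m} ∩ E ⁻¹' {e} ∩ X ⁻¹' {x}) ≠ 0) :
    theta0 μ X M E Y =
      ∫ ω, (if E ω then (0:ℝ) else 1) / cP μ (E ⁻¹' {false}) (X ⁻¹' {X ω}) *
        cE μ Y (E ⁻¹' {true} ∩ M ⁻¹' {M ω} ∩ X ⁻¹' {X ω}) ∂μ := by
  classical
  set T : Ω → Bool × 𝒮 × 𝒳 := fun ω => (E ω, M ω, X ω) with hTdef
  have hT : Measurable T := hE.prodMk (hM.prodMk hX)
  set F : Bool × 𝒮 × 𝒳 → ℝ := fun p =>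
    (if p.1 then (0:ℝ) else 1) / cP μ (E ⁻¹' {false}) (X ⁻¹' {p.2.2}) *
      cE μ Y (E ⁻¹' {true} ∩ M ⁻¹' {p.2.1} ∩ X ⁻¹' {p.2.2}) with hFdef
  have hFmeas : Measurable F := measurable_of_countable F
  have hint : ∫ ω, F (T ω) ∂μ = ∫ p, F p ∂(μ.map T) :=
    (integral_map hT.aemeasurable hFmeas.aestronglyMeasurable).symm
  have hcell : ∀ e m x, (μ.map T) {(e, m, x)} = μ (E ⁻¹' {e} ∩ M ⁻¹' {m} ∩ X ⁻¹' {x}) := by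
    intro e m x
    rw [Measure.map_apply hT (measurableSet_singleton _)]
    congr 1
    ext ω
    simp [hTdef, Prod.ext_iff, and_assoc]
  haveI : IsProbabilityMeasure (μ.map T) := Measure.isProbabilityMeasure_map hT.aemeasurable
  have hIF : Integrable F (μ.map T) := .of_finite
  have hsum : ∫ p, F p ∂(μ.map T) = ∑ p : Bool × 𝒮 × 𝒳, ((μ.map T) {p}).toReal • F p :=
    integral_fintype hIF
  have hrhs : (∫ ω, (if E ω then (0:ℝ) else 1) / cP μ (E ⁻¹' {false}) (X ⁻¹' {X ω}) *
        cE μ Y (E ⁻¹' {true} ∩ M ⁻¹' {M ω} ∩ X ⁻¹' {X ω}) ∂μ) = ∫ ω, F (T ω) ∂μ := rfl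
  rw [hrhs, hint, hsum]
  rw [Fintype.sum_prod_type]
  rw [Fintype.sum_bool]
  have htrue : ∀ q : 𝒮 × 𝒳, ((μ.map T) {((true : Bool), q)}).toReal • F (true, q) = 0 := by
    intro q
    simp [hFdef]
  rw [Finset.sum_congr rfl fun q _ => htrue q]
  rw [Finset.sum_const_zero, zero_add, Fintype.sum_prod_type]
  unfold theta0
  refine Finset.sum_congr rfl fun m _ => ?_
  rw [Finset.sum_subset (Finset.subset_univ _)]
  · refine Finset.sum_congr rfl fun x _ => ?_
    rw [hcell]
    have hset : E ⁻¹' (({false} : Set Bool)) ∩ M ⁻¹' {m} ∩ X ⁻¹' {x}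
        = M ⁻¹' {m} ∩ (E ⁻¹' {false} ∩ X ⁻¹' {x}) := by
      ext ω; simp [Set.mem_inter_iff]; tauto
    rw [hset]
    simp only [hFdef, cP, cE, if_neg Bool.false_ne_true, Bool.false_eq_true, if_false]
    rw [one_div_div, smul_eq_mul]
    ring
  · intro x _ hx
    simp only [Finset.mem_filter, Finset.mem_univ, true_and, not_not] at hx
    rw [hx]
    simp
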